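/- Let a ∈ ℝ, let I_f be an interval with least element a, nonempty interior, and I_f ⊂ [a,∞), let Ω ⊂ ℝ^m be a nonempty open set, let α = (α₁,…,α_m) ∈ (0,1]^m, let q_a ∈ Ω, and let f : Ω × I_f → ℝ^m be a Carathéodory function. Then every local solution (q,I) of the Caputo Cauchy problem ( _cD^{α_i}_{a+}[q_i] = f_i(q(·),·) a.e., q(a) = q_a ) can be extended to a maximal solution: there exists a maximal solution (q*,I*) with I ⊂ I* and q* = q on I. -/
import Mathlib


open MeasureTheory Set

/-- Left Riemann–Liouville fractional integral of order `α` with base point `a`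
(for `α = 0` it is the identity). -/
noncomputable def rlInt (a α : ℝ) (q : ℝ → ℝ) (t : ℝ) : ℝ :=
  if α = 0 then q t else (1 / Real.Gamma α) * ∫ τ in a..t, (t - τ) ^ (α - 1) * q τ

lemma rlInt_congr (a β t : ℝ) (hat : a ≤ t) (f g : ℝ → ℝ)
    (hfg : ∀ τ ∈ Set.Icc a t, f τ = g τ) :
    rlInt a β f t = rlInt a β g t := by
  unfold rlInt
  split
  · exact hfg t ⟨hat, le_rfl⟩
  · congr 1
    apply intervalIntegral.integral_congr
    intro τ hτ
    rw [Set.uIcc_of_le hat] at hτ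
    simp only []
    show (t - τ) ^ (β - 1) * f τ = (t - τ) ^ (β - 1) * g τ
    rw [hfg τ hτ]

lemma null_of_null_inter_Icc {a : ℝ} {U B : Set ℝ} (hU : U ⊆ Set.Ici a) (hB : B ⊆ U)
    (hnull : ∀ x ∈ U, volume (B ∩ Set.Icc a x) = 0) : volume B = 0 := by
  classical
  set R : Set ℚ := {r | ∃ y ∈ U, (r : ℝ) ≤ y} with hR
  have hpiece : ∀ r ∈ R, volume (B ∩ Set.Iic (r : ℝ)) = 0 := by
    rintro r ⟨y, hy, hry⟩
    refine measure_mono_null ?_ (hnull y hy)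
    rintro x ⟨hxB, hxr⟩
    exact ⟨hxB, hU (hB hxB), le_trans hxr hry⟩
  set M := B \ ⋃ r ∈ R, Set.Iic (r : ℝ) with hMdef
  have key : ∀ x ∈ M, ∀ z ∈ M, ¬ x < z := by
    intro x hx z hz hlt
    obtain ⟨r, hr1, hr2⟩ := exists_rat_btwn hlt
    have hrR : r ∈ R := ⟨z, hB hz.1, le_of_lt hr2⟩
    exact hx.2 (Set.mem_biUnion hrR (le_of_lt hr1))
  have hM : M.Subsingleton := by
    intro x hx z hz
    rcases lt_trichotomy x z with h | h | h
    · exact absurd h (key x hx z hz)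
    · exact h
    · exact absurd h (key z hz x hx)
  have hBsub : B ⊆ M ∪ ⋃ r ∈ R, (B ∩ Set.Iic (r : ℝ)) := by
    intro x hx
    by_cases hx' : x ∈ ⋃ r ∈ R, Set.Iic (r : ℝ)
    · right
      obtain ⟨r, hr, hxr⟩ := Set.mem_iUnion₂.mp hx'
      exact Set.mem_biUnion hr ⟨hx, hxr⟩
    · exact Or.inl ⟨hx, hx'⟩
  refine measure_mono_null hBsub (measure_union_null (hM.measure_zero _) ?_)
  exact (measure_biUnion_null_iff (Set.to_countable R)).mpr hpiece
/-- `I` is an interval with least element `a`, nonempty interior, and `I ⊆ [a,∞)`. -/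
def IsIntervalFrom (a : ℝ) (I : Set ℝ) : Prop :=
  a ∈ I ∧ I ⊆ Set.Ici a ∧ (interior I).Nonempty ∧ I.OrdConnected

/-- `(q, I)` is a local solution of the Caputo Cauchy problem
`_cD^{α_i}_{a+}[q_i] = F_i(q(·),·)` a.e., `q(a) = qa`, on the domain `Ω`:
`I ⊆ If` is an interval with least element `a` and nonempty interior, `q` is continuous
on `I` with values in `Ω` and `q(a) = qa`, and for each `i` the function
`I^{1-α_i}_{a+}[q_i - (qa)_i]` agrees a.e. on `I` with a locally absolutely continuous
function `t ↦ c + ∫_a^t h` whose derivative `h` (the Caputo fractional derivative of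
`q_i`) equals `F_i(q(t), t)` for almost every `t ∈ I`. -/
def IsCaputoLocalSol (a : ℝ) (If : Set ℝ) {m : ℕ}
    (Ω : Set (EuclideanSpace ℝ (Fin m))) (α : Fin m → ℝ)
    (qa : EuclideanSpace ℝ (Fin m))
    (F : EuclideanSpace ℝ (Fin m) → ℝ → EuclideanSpace ℝ (Fin m))
    (q : ℝ → EuclideanSpace ℝ (Fin m)) (I : Set ℝ) : Prop :=
  IsIntervalFrom a I ∧ I ⊆ If ∧ ContinuousOn q I ∧ (∀ t ∈ I, q t ∈ Ω) ∧ q a = qa ∧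
  ∀ i, ∃ c : ℝ, ∃ h : ℝ → ℝ,
    (∀ b ∈ I, MeasureTheory.IntegrableOn h (Set.Icc a b)) ∧
    (∀ᵐ t ∂(MeasureTheory.volume.restrict I),
      rlInt a (1 - α i) (fun τ => q τ i - qa i) t = c + ∫ τ in a..t, h τ) ∧
    (∀ᵐ t ∂(MeasureTheory.volume.restrict I), h t = F (q t) t i)

lemma caputo_chain_ub {m : ℕ} {a : ℝ} {If : Set ℝ} {Ω : Set (EuclideanSpace ℝ (Fin m))}
    {α : Fin m → ℝ} {qa : EuclideanSpace ℝ (Fin m)}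
    {F : EuclideanSpace ℝ (Fin m) → ℝ → EuclideanSpace ℝ (Fin m)}
    {C : Set ((ℝ → EuclideanSpace ℝ (Fin m)) × Set ℝ)}
    (hC : ∀ p ∈ C, IsCaputoLocalSol a If Ω α qa F p.1 p.2)
    (hchain : IsChain (fun p p' => p.2 ⊆ p'.2 ∧ Set.EqOn p'.1 p.1 p.2) C)
    (hne : C.Nonempty) :
    ∃ Q : ℝ → EuclideanSpace ℝ (Fin m),
      IsCaputoLocalSol a If Ω α qa F Q (⋃ p ∈ C, p.2) ∧
      ∀ p ∈ C, Set.EqOn Q p.1 p.2 := by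
  classical
  obtain ⟨p₀, hp₀⟩ := hne
  set U := ⋃ p ∈ C, p.2 with hUdef
  have hexch : ∀ t ∈ U, ∃ p, p ∈ C ∧ t ∈ p.2 := by
    intro t ht
    obtain ⟨p, hp, htp⟩ := Set.mem_iUnion₂.mp ht
    exact ⟨p, hp, htp⟩
  have htot : ∀ p ∈ C, ∀ p' ∈ C,
      (p.2 ⊆ p'.2 ∧ Set.EqOn p'.1 p.1 p.2) ∨ (p'.2 ⊆ p.2 ∧ Set.EqOn p.1 p'.1 p'.2) := by
    intro p hp p' hp'
    rcases eq_or_ne p p' with rfl | hne'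
    · exact Or.inl ⟨subset_rfl, fun x _ => rfl⟩
    · exact hchain hp hp' hne'
  set Q : ℝ → EuclideanSpace ℝ (Fin m) :=
    fun t => if h : ∃ p, p ∈ C ∧ t ∈ p.2 then h.choose.1 t else qa with hQdef
  have hco : ∀ p ∈ C, ∀ t ∈ p.2, Q t = p.1 t := by
    intro p hp t ht
    have h : ∃ p', p' ∈ C ∧ t ∈ p'.2 := ⟨p, hp, ht⟩
    simp only [hQdef, dif_pos h]
    rcases htot p hp h.choose h.choose_spec.1 with ⟨_, heq⟩ | ⟨_, heq⟩
    · exact heq ht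
    · exact (heq h.choose_spec.2).symm
  have hUmem : ∀ p ∈ C, p.2 ⊆ U := fun p hp => Set.subset_biUnion_of_mem hp
  have haU : a ∈ U := hUmem p₀ hp₀ (hC p₀ hp₀).1.1
  have hUIci : U ⊆ Set.Ici a := by
    intro x hx; obtain ⟨p, hp, hxp⟩ := hexch x hx; exact (hC p hp).1.2.1 hxp
  have hUIf : U ⊆ If := by
    intro x hx; obtain ⟨p, hp, hxp⟩ := hexch x hx; exact (hC p hp).2.1 hxp
  have hUint : (interior U).Nonempty :=
    (hC p₀ hp₀).1.2.2.1.mono (interior_mono (hUmem p₀ hp₀))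
  have hIcc : ∀ p ∈ C, ∀ t ∈ p.2, Set.Icc a t ⊆ p.2 :=
    fun p hp t ht => (hC p hp).1.2.2.2.out (hC p hp).1.1 ht
  have hUord : U.OrdConnected := by
    constructor
    intro x hx y hy
    obtain ⟨p, hp, hxp⟩ := hexch x hx
    obtain ⟨p', hp', hyp⟩ := hexch y hy
    rcases htot p hp p' hp' with ⟨hsub, _⟩ | ⟨hsub, _⟩
    · exact ((hC p' hp').1.2.2.2.out (hsub hxp) hyp).trans (hUmem p' hp')
    · exact ((hC p hp).1.2.2.2.out hxp (hsub hyp)).trans (hUmem p hp)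
  have hmeasJ : ∀ p ∈ C, MeasurableSet p.2 := fun p hp => ((hC p hp).1.2.2.2).measurableSet
  have hmeasU : MeasurableSet U := hUord.measurableSet
  have hQcont : ContinuousOn Q U := by
    intro t ht
    obtain ⟨p, hp, htp⟩ := hexch t ht
    by_cases hex : ∃ p' ∈ C, ∃ s ∈ p'.2, t < s
    · obtain ⟨p', hp', s, hsp', hts⟩ := hex
      obtain ⟨pb, hpb, htb, hsb⟩ : ∃ pb, pb ∈ C ∧ t ∈ pb.2 ∧ s ∈ pb.2 := by
        rcases htot p hp p' hp' with ⟨hsub, _⟩ | ⟨hsub, _⟩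
        · exact ⟨p', hp', hsub htp, hsp'⟩
        · exact ⟨p, hp, htp, hsub hsp'⟩
      have hsubset : U ∩ Set.Iio s ⊆ pb.2 := by
        rintro x ⟨hxU, hxs⟩
        exact hIcc pb hpb s hsb ⟨hUIci hxU, le_of_lt hxs⟩
      have h1 : ContinuousWithinAt pb.1 (U ∩ Set.Iio s) t :=
        ((hC pb hpb).2.2.1 t htb).mono hsubset
      have h2 : ContinuousWithinAt Q (U ∩ Set.Iio s) t :=
        h1.congr (fun x hx => hco pb hpb x (hsubset hx)) (hco pb hpb t htb)
      exact h2.mono_of_mem_nhdsWithin (inter_mem_nhdsWithin U (Iio_mem_nhds hts))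
    · push_neg at hex
      have hUsub : U ⊆ p.2 := by
        intro x hx
        obtain ⟨px, hpx, hxpx⟩ := hexch x hx
        exact hIcc p hp t htp ⟨hUIci hx, hex px hpx x hxpx⟩
      exact (((hC p hp).2.2.1 t htp).mono hUsub).congr
        (fun x hx => hco p hp x (hUsub hx)) (hco p hp t htp)
  have hQΩ : ∀ t ∈ U, Q t ∈ Ω := by
    intro t ht
    obtain ⟨p, hp, htp⟩ := hexch t ht
    rw [hco p hp t htp]
    exact (hC p hp).2.2.2.1 t htp
  have hQa : Q a = qa := by
    rw [hco p₀ hp₀ a (hC p₀ hp₀).1.1]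
    exact (hC p₀ hp₀).2.2.2.2.1
  refine ⟨Q, ⟨⟨haU, hUIci, hUint, hUord⟩, hUIf, hQcont, hQΩ, hQa, ?_⟩,
    fun p hp x hx => hco p hp x hx⟩
  intro i
  set h : ℝ → ℝ := fun t => F (Q t) t i with hhdef
  -- the function h_p of a member p agrees a.e. with h on p.2
  have hpe : ∀ p ∈ C, ∀ hp' : ℝ → ℝ,
      (∀ᵐ t ∂(volume.restrict p.2), hp' t = F (p.1 t) t i) →
      ∀ᵐ x ∂(volume.restrict p.2), hp' x = h x := by
    intro p hp hp' heq
    filter_upwards [heq, ae_restrict_mem (hmeasJ p hp)] with x hx hxp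
    rw [hx, hhdef]
    simp only []
    rw [hco p hp x hxp]
  have hA : ∀ p ∈ C, ∃ cp : ℝ,
      ∀ᵐ t ∂(volume.restrict p.2),
        rlInt a (1 - α i) (fun τ => Q τ i - qa i) t = cp + ∫ τ in a..t, h τ := by
    intro p hp
    obtain ⟨cp, hp', hint, hae, heq⟩ := (hC p hp).2.2.2.2.2 i
    refine ⟨cp, ?_⟩
    have hpe1 : ∀ᵐ x ∂volume, x ∈ p.2 → hp' x = h x :=
      (ae_restrict_iff' (hmeasJ p hp)).mp (hpe p hp hp' heq)
    filter_upwards [hae, ae_restrict_mem (hmeasJ p hp)] with t h1 htp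
    have hat : a ≤ t := (hC p hp).1.2.1 htp
    have hIcct := hIcc p hp t htp
    have e1 : rlInt a (1 - α i) (fun τ => Q τ i - qa i) t
        = rlInt a (1 - α i) (fun τ => p.1 τ i - qa i) t := by
      apply rlInt_congr a _ t hat
      intro τ hτ
      rw [hco p hp τ (hIcct hτ)]
    have e2 : ∫ τ in a..t, hp' τ = ∫ τ in a..t, h τ := by
      apply intervalIntegral.integral_congr_ae'
      · filter_upwards [hpe1] with x hx hmem
        exact hx (hIcct ⟨le_of_lt hmem.1, hmem.2⟩)
      · apply Filter.Eventually.of_forall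
        intro x hx
        exact absurd (hx.1.trans_le (hx.2.trans hat)) (lt_irrefl t)
    rw [e1, h1, e2]
  have hB : ∀ p ∈ C, ∀ c1 c2 : ℝ,
      (∀ᵐ t ∂(volume.restrict p.2),
        rlInt a (1 - α i) (fun τ => Q τ i - qa i) t = c1 + ∫ τ in a..t, h τ) →
      (∀ᵐ t ∂(volume.restrict p.2),
        rlInt a (1 - α i) (fun τ => Q τ i - qa i) t = c2 + ∫ τ in a..t, h τ) →
      c1 = c2 := by
    intro p hp c1 c2 h1 h2
    by_contra hne'
    have hfalse : ∀ᵐ t ∂(volume.restrict p.2), False := by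
      filter_upwards [h1, h2] with t e1 e2
      exact hne' (by linarith)
    rw [ae_iff] at hfalse
    have h0 : volume.restrict p.2 Set.univ = 0 := by simpa using hfalse
    rw [Measure.restrict_apply_univ] at h0
    exact absurd h0 (Measure.measure_pos_of_nonempty_interior _ (hC p hp).1.2.2.1).ne'
  choose cf hcf using hA
  have hCc : ∀ p ∈ C,
      ∀ᵐ t ∂(volume.restrict p.2),
        rlInt a (1 - α i) (fun τ => Q τ i - qa i) t = cf p₀ hp₀ + ∫ τ in a..t, h τ := by
    intro p hp
    rcases htot p hp p₀ hp₀ with ⟨hsub, _⟩ | ⟨hsub, _⟩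
    · exact ae_restrict_of_ae_restrict_of_subset hsub (hcf p₀ hp₀)
    · have h1 := ae_restrict_of_ae_restrict_of_subset hsub (hcf p hp)
      have he : cf p hp = cf p₀ hp₀ := hB p₀ hp₀ _ _ h1 (hcf p₀ hp₀)
      rw [← he]
      exact hcf p hp
  refine ⟨cf p₀ hp₀, h, ?_, ?_, Filter.Eventually.of_forall fun t => rfl⟩
  · -- integrability
    intro b hb
    obtain ⟨p, hp, hbp⟩ := hexch b hb
    obtain ⟨cp, hp', hint, hae, heq⟩ := (hC p hp).2.2.2.2.2 i
    have hsub : Set.Icc a b ⊆ p.2 := hIcc p hp b hbp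
    have := ae_restrict_of_ae_restrict_of_subset hsub (hpe p hp hp' heq)
    exact (hint b hbp).congr this
  · -- the a.e. identity on U
    rw [ae_restrict_iff' hmeasU, ae_iff]
    apply null_of_null_inter_Icc hUIci (B := {t | ¬ (t ∈ U →
      rlInt a (1 - α i) (fun τ => Q τ i - qa i) t = cf p₀ hp₀ + ∫ τ in a..t, h τ)})
    · intro t ht
      exact (_root_.not_imp.mp ht).1
    · intro x hx
      obtain ⟨p, hp, hxp⟩ := hexch x hx
      have hnull : volume {t | ¬ (t ∈ p.2 →
          rlInt a (1 - α i) (fun τ => Q τ i - qa i) t = cf p₀ hp₀ + ∫ τ in a..t, h τ)} = 0 := by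
        rw [← ae_iff]
        exact (ae_restrict_iff' (hmeasJ p hp)).mp (hCc p hp)
      refine measure_mono_null ?_ hnull
      rintro t ⟨htB, htIcc⟩
      intro hcon
      exact (_root_.not_imp.mp htB).2 (hcon (hIcc p hp x hxp htIcc))

/-- `(q, I)` is a maximal local solution of the Caputo Cauchy problem:
every extension `(q', I')` of it satisfies `I' = I`. -/
def IsMaximalSol (a : ℝ) (If : Set ℝ) {m : ℕ}
    (Ω : Set (EuclideanSpace ℝ (Fin m))) (α : Fin m → ℝ)
    (qa : EuclideanSpace ℝ (Fin m))
    (F : EuclideanSpace ℝ (Fin m) → ℝ → EuclideanSpace ℝ (Fin m))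
    (q : ℝ → EuclideanSpace ℝ (Fin m)) (I : Set ℝ) : Prop :=
  IsCaputoLocalSol a If Ω α qa F q I ∧
  ∀ (q' : ℝ → EuclideanSpace ℝ (Fin m)) (I' : Set ℝ),
    IsCaputoLocalSol a If Ω α qa F q' I' → I ⊆ I' → Set.EqOn q' q I → I' = I

theorem statement15 (a : ℝ) (If : Set ℝ)
    (haI : a ∈ If) (hIsub : If ⊆ Set.Ici a) (hIint : (interior If).Nonempty)
    (hIord : If.OrdConnected)
    (m : ℕ) (hm : 0 < m) (Ω : Set (EuclideanSpace ℝ (Fin m)))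
    (hΩopen : IsOpen Ω) (hΩne : Ω.Nonempty)
    (α : Fin m → ℝ) (hα : ∀ i, 0 < α i ∧ α i ≤ 1)
    (qa : EuclideanSpace ℝ (Fin m)) (hqa : qa ∈ Ω)
    (F : EuclideanSpace ℝ (Fin m) → ℝ → EuclideanSpace ℝ (Fin m))
    -- Carathéodory assumptions
    (hFmeas : ∀ x ∈ Ω, MeasureTheory.AEStronglyMeasurable (fun t => F x t)
      (MeasureTheory.volume.restrict If))
    (hFcont : ∀ᵐ t ∂(MeasureTheory.volume.restrict If), ContinuousOn (fun x => F x t) Ω) :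
    ∀ (q : ℝ → EuclideanSpace ℝ (Fin m)) (I : Set ℝ),
      IsCaputoLocalSol a If Ω α qa F q I →
      ∃ (qstar : ℝ → EuclideanSpace ℝ (Fin m)) (Istar : Set ℝ),
        IsMaximalSol a If Ω α qa F qstar Istar ∧ I ⊆ Istar ∧ Set.EqOn qstar q I := by
  intro q I hsol
  classical
  let S := {p : (ℝ → EuclideanSpace ℝ (Fin m)) × Set ℝ //
    IsCaputoLocalSol a If Ω α qa F p.1 p.2 ∧ I ⊆ p.2 ∧ Set.EqOn p.1 q I}
  let r : S → S → Prop := fun p p' => p.1.2 ⊆ p'.1.2 ∧ Set.EqOn p'.1.1 p.1.1 p.1.2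
  have base : S := ⟨(q, I), hsol, subset_rfl, fun x _ => rfl⟩
  have htrans : ∀ {x y z : S}, r x y → r y z → r x z := by
    rintro x y z ⟨h1, h2⟩ ⟨h3, h4⟩
    exact ⟨h1.trans h3, fun t ht => (h4 (h1 ht)).trans (h2 ht)⟩
  have hbdd : ∀ c : Set S, IsChain r c → ∃ ub, ∀ p ∈ c, r p ub := by
    intro c hc
    rcases c.eq_empty_or_nonempty with rfl | hcne
    · exact ⟨base, by simp⟩
    set C : Set ((ℝ → EuclideanSpace ℝ (Fin m)) × Set ℝ) := Subtype.val '' c with hCdef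
    have hCsol : ∀ p ∈ C, IsCaputoLocalSol a If Ω α qa F p.1 p.2 := by
      rintro p ⟨ps, hps, rfl⟩; exact ps.2.1
    have hCchain : IsChain (fun p p' => p.2 ⊆ p'.2 ∧ Set.EqOn p'.1 p.1 p.2) C := by
      rintro p ⟨ps, hps, rfl⟩ p' ⟨ps', hps', rfl⟩ hne'
      exact hc hps hps' (fun e => hne' (congrArg Subtype.val e))
    have hCne : C.Nonempty := hcne.image _
    obtain ⟨Q, hQsol, hQeq⟩ := caputo_chain_ub hCsol hCchain hCne
    obtain ⟨p₁, hp₁⟩ := hcne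
    have hp₁C : p₁.1 ∈ C := ⟨p₁, hp₁, rfl⟩
    refine ⟨⟨(Q, ⋃ p ∈ C, p.2), hQsol, ?_, ?_⟩, ?_⟩
    · exact p₁.2.2.1.trans (Set.subset_biUnion_of_mem hp₁C)
    · intro x hx
      show Q x = q x
      rw [hQeq p₁.1 hp₁C (p₁.2.2.1 hx)]
      exact p₁.2.2.2 hx
    · intro p hp
      exact ⟨Set.subset_biUnion_of_mem (⟨p, hp, rfl⟩ : p.1 ∈ C),
        fun x hx => hQeq p.1 ⟨p, hp, rfl⟩ hx⟩
  obtain ⟨M, hM⟩ := exists_maximal_of_chains_bounded hbdd htrans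
  refine ⟨M.1.1, M.1.2, ⟨M.2.1, ?_⟩, M.2.2.1, M.2.2.2⟩
  intro q' I' hsol' hsub heq
  have hS' : IsCaputoLocalSol a If Ω α qa F q' I' ∧ I ⊆ I' ∧ Set.EqOn q' q I :=
    ⟨hsol', M.2.2.1.trans hsub, fun x hx => (heq (M.2.2.1 hx)).trans (M.2.2.2 hx)⟩
  have hmax := hM ⟨(q', I'), hS'⟩ ⟨hsub, heq⟩
  exact subset_antisymm hmax.1 hsub
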